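/- Let F ∈ Fields_1 and m ≥ 3. The ℚ-linear map B_2(F(t))⊗Λ^{m−2} F(t)^× → ⊕_p B_2(F(p))⊗Λ^{m−3} F(p)^×, where the direct sum is over all monic irreducible polynomials p ∈ F[t] and the p-th component is the tame symbol ∂_{ν_p}, is surjective. -/

import Mathlib

open scoped TensorProduct
open ExteriorAlgebra

noncomputable section ChowPrelim

universe u

/-- The ℚ-vector space `F^× ⊗ ℚ` attached to a field `F`. -/
abbrev UnitsQ (F : Type u) [Field F] : Type u := ℚ ⊗[ℤ] (Additive Fˣ)

/-- The canonical map `F → F^× ⊗ ℚ`, sending a nonzero `x` to `x ⊗ 1` and `0` to `0`. -/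
noncomputable def mkQ {F : Type u} [Field F] (x : F) : UnitsQ F :=
  letI := Classical.dec (x = 0)
  if h : x = 0 then 0 else (1 : ℚ) ⊗ₜ[ℤ] (Additive.ofMul (Units.mk0 x h))

/-- The wedge `x₁ ∧ ⋯ ∧ xₙ ∈ Λ^n (F^× ⊗ ℚ)` of a family of elements of `F`. -/
noncomputable def wedgeF {F : Type u} [Field F] (n : ℕ) (x : Fin n → F) :
    ⋀[ℚ]^n (UnitsQ F) :=
  ⟨ExteriorAlgebra.ιMulti ℚ n (fun i => mkQ (x i)),
    ExteriorAlgebra.ιMulti_range ℚ n ⟨_, rfl⟩⟩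

/-- Wedge of an abstract family of vectors. -/
noncomputable def wedgeV {M : Type u} [AddCommGroup M] [Module ℚ M] (n : ℕ) (v : Fin n → M) :
    ⋀[ℚ]^n M :=
  ⟨ExteriorAlgebra.ιMulti ℚ n v, ExteriorAlgebra.ιMulti_range ℚ n ⟨_, rfl⟩⟩

/-- The product `a ∧ v₁ ∧ ⋯ ∧ v_q : Λ^r M` of an element `a ∈ Λ^p M` with `q` further vectors,
where `p + q = r`. -/
noncomputable def wedgeMulC {M : Type u} [AddCommGroup M] [Module ℚ M] (p q r : ℕ)
    (h : p + q = r) (a : ⋀[ℚ]^p M) (v : Fin q → M) : ⋀[ℚ]^r M :=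
  ⟨a.1 * (ExteriorAlgebra.ιMulti ℚ q v : ExteriorAlgebra ℚ M), by
    subst h
    have hmem : (ExteriorAlgebra.ιMulti ℚ q v : ExteriorAlgebra ℚ M) ∈
        (LinearMap.range (ι ℚ : M →ₗ[ℚ] ExteriorAlgebra ℚ M)) ^ q :=
      ExteriorAlgebra.ιMulti_range ℚ q ⟨_, rfl⟩
    have h2 := Submodule.mul_mem_mul a.2 hmem
    rw [← pow_add] at h2
    exact h2⟩

/-- The functorial map `Λ^n M → Λ^n N` induced by a linear map. -/
noncomputable def powMap {M N : Type u} [AddCommGroup M] [Module ℚ M]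
    [AddCommGroup N] [Module ℚ N] (n : ℕ) (f : M →ₗ[ℚ] N) :
    ⋀[ℚ]^n M →ₗ[ℚ] ⋀[ℚ]^n N :=
  (ExteriorAlgebra.map f).toLinearMap.restrict (p := ⋀[ℚ]^n M) (q := ⋀[ℚ]^n N)
    (by
      intro x hx
      have h : Submodule.map (ExteriorAlgebra.map f).toLinearMap (⋀[ℚ]^n M) ≤ ⋀[ℚ]^n N := by
        rw [← ExteriorAlgebra.ιMulti_span_fixedDegree, ← ExteriorAlgebra.ιMulti_span_fixedDegree,
          Submodule.map_span]
        refine Submodule.span_le.2 ?_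
        rintro _ ⟨_, ⟨v, rfl⟩, rfl⟩
        exact Submodule.subset_span ⟨f ∘ v, (ExteriorAlgebra.map_apply_ιMulti f v).symm⟩
      exact h ⟨x, hx, rfl⟩)

/-- The linear map `F^× ⊗ ℚ → K^× ⊗ ℚ` induced by a field embedding. -/
noncomputable def unitsQMap {F K : Type u} [Field F] [Field K] (j : F →+* K) :
    UnitsQ F →ₗ[ℚ] UnitsQ K :=
  LinearMap.baseChange ℚ
    ((MonoidHom.toAdditive (Units.map (j : F →* K))).toIntLinearMap)

section PreBloch

variable (F : Type u) [Field F]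

/-- Auxiliary "difference" of two points of `P^1(F) = Option F` (`none` is `∞`),
used to define the cross-ratio. -/
def pdiff : Option F → Option F → F
  | some a, some b => a - b
  | _, _ => 1

/-- The cross-ratio of four points of `P^1(F)`, as an element of `F`
(it lies in `F ∖ {0,1}` when the four points are distinct). -/
def crossRatio (x1 x2 x3 x4 : Option F) : F :=
  (pdiff F x1 x3 * pdiff F x2 x4) / (pdiff F x1 x4 * pdiff F x2 x3)

/-- The subspace of relations defining the pre-Bloch group: `{0}₂, {1}₂, {∞}₂` and the
five-term cross-ratio relations for five distinct points of `P^1(F)`. -/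
def B2Rel : Submodule ℚ (Option F →₀ ℚ) :=
  Submodule.span ℚ
    ({Finsupp.single (some 0) 1, Finsupp.single (some 1) 1, Finsupp.single none 1} ∪
      {r | ∃ x : Fin 5 → Option F, Function.Injective x ∧
        r = ∑ i : Fin 5, ((-1 : ℚ) ^ (i : ℕ)) •
          Finsupp.single (some (crossRatio F (x (i.succAbove 0)) (x (i.succAbove 1))
            (x (i.succAbove 2)) (x (i.succAbove 3)))) (1 : ℚ)})

/-- The pre-Bloch group `B₂(F)` (with ℚ-coefficients). -/
abbrev B2 : Type u := (Option F →₀ ℚ) ⧸ B2Rel F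

/-- The generator `{x}₂` of the pre-Bloch group. -/
def B2.gen {F : Type u} [Field F] (x : F) : B2 F :=
  Submodule.Quotient.mk (Finsupp.single (some x) 1)

end PreBloch

section Deltas

variable (F : Type u) [Field F]

/-- `d` is the differential `δ₂ : B₂(F) → Λ² F^×`, `{x}₂ ↦ x ∧ (1-x)`. -/
def IsDelta2 (d : B2 F →ₗ[ℚ] ⋀[ℚ]^2 (UnitsQ F)) : Prop :=
  ∀ x : F, x ≠ 0 → x ≠ 1 → d (B2.gen x) = wedgeF 2 ![x, 1 - x]

/-- `d` is the differential `δ₃ : B₂(F) ⊗ F^× → Λ³ F^×`, `{x}₂ ⊗ y ↦ x ∧ (1-x) ∧ y`. -/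
def IsDelta3 (d : B2 F ⊗[ℚ] UnitsQ F →ₗ[ℚ] ⋀[ℚ]^3 (UnitsQ F)) : Prop :=
  ∀ x y : F, x ≠ 0 → x ≠ 1 → y ≠ 0 →
    d (B2.gen x ⊗ₜ mkQ y) = wedgeF 3 ![x, 1 - x, y]

/-- `d` is the differential `δ₄ : B₂(F) ⊗ Λ² F^× → Λ⁴ F^×`,
`{x}₂ ⊗ (y ∧ z) ↦ x ∧ (1-x) ∧ y ∧ z`. -/
def IsDelta4 (d : B2 F ⊗[ℚ] (⋀[ℚ]^2 (UnitsQ F)) →ₗ[ℚ] ⋀[ℚ]^4 (UnitsQ F)) : Prop :=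
  ∀ x y z : F, x ≠ 0 → x ≠ 1 → y ≠ 0 → z ≠ 0 →
    d (B2.gen x ⊗ₜ wedgeF 2 ![y, z]) = wedgeF 4 ![x, 1 - x, y, z]

end Deltas

section Valuations

variable {F K : Type u} [Field F] [Field K]

/-- `ν` is (the additive form of) a discrete valuation on `F`:
a surjection onto `ℤ` defined on `F ∖ {0}`, multiplicative, and
satisfying the ultrametric inequality. -/
structure IsDVal (ν : F → ℤ) : Prop where
  map_mul : ∀ x y : F, x ≠ 0 → y ≠ 0 → ν (x * y) = ν x + ν y
  map_add : ∀ x y : F, x ≠ 0 → y ≠ 0 → x + y ≠ 0 → min (ν x) (ν y) ≤ ν (x + y)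
  surj : ∀ n : ℤ, ∃ x : F, x ≠ 0 ∧ ν x = n

/-- `res : F → K` realizes `K` as the residue field of the discrete valuation `ν`:
it is a surjective ring homomorphism on the valuation ring `O_ν` with kernel the
maximal ideal `m_ν` (and arbitrary elsewhere). -/
structure IsResidue (ν : F → ℤ) (res : F → K) : Prop where
  map_one : res 1 = 1
  map_add : ∀ x y : F, (x = 0 ∨ 0 ≤ ν x) → (y = 0 ∨ 0 ≤ ν y) →
    res (x + y) = res x + res y
  map_mul : ∀ x y : F, (x = 0 ∨ 0 ≤ ν x) → (y = 0 ∨ 0 ≤ ν y) →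
    res (x * y) = res x * res y
  zero_iff : ∀ x : F, (x = 0 ∨ 0 ≤ ν x) → (res x = 0 ↔ (x = 0 ∨ 0 < ν x))
  surj : ∀ z : K, ∃ x : F, (x = 0 ∨ 0 ≤ ν x) ∧ res x = z

/-- `D` is the tame symbol `∂_ν^{(n+1)} : Λ^{n+1} F^× → Λ^n K^×` attached to the discrete
valuation `ν` with residue field `K` (via `res`): it is characterized by
`∂(π ∧ u₂ ∧ ⋯ ∧ u_{n+1}) = ū₂ ∧ ⋯ ∧ ū_{n+1}` for a uniformizer `π` and units `uᵢ`. -/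
def IsTame (ν : F → ℤ) (res : F → K) (n : ℕ)
    (D : ⋀[ℚ]^(n + 1) (UnitsQ F) →ₗ[ℚ] ⋀[ℚ]^n (UnitsQ K)) : Prop :=
  ∀ (π : F) (u : Fin n → F), π ≠ 0 → ν π = 1 → (∀ i, u i ≠ 0 ∧ ν (u i) = 0) →
    D (wedgeF (n + 1) (Fin.cons π u)) = wedgeF n (fun i => res (u i))

/-- `D` is the tame symbol `∂_ν^{(2)} : Λ² F^× → K^×`, with target the residue field itself. -/
def IsTame2U (ν : F → ℤ) (res : F → K) (D : ⋀[ℚ]^2 (UnitsQ F) →ₗ[ℚ] UnitsQ K) : Prop :=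
  ∀ π u : F, π ≠ 0 → ν π = 1 → u ≠ 0 → ν u = 0 → D (wedgeF 2 ![π, u]) = mkQ (res u)

/-- `D` is the tame symbol `∂_ν : B₂(F) ⊗ F^× → B₂(K)`. -/
def IsTameB1 (ν : F → ℤ) (res : F → K)
    (D : B2 F ⊗[ℚ] UnitsQ F →ₗ[ℚ] B2 K) : Prop :=
  (∀ a b : F, a ≠ 0 → a ≠ 1 → ν a ≠ 0 → b ≠ 0 → D (B2.gen a ⊗ₜ mkQ b) = 0) ∧
  (∀ u b : F, u ≠ 0 → ν u = 0 → b ≠ 0 →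
    D (B2.gen u ⊗ₜ mkQ b) = -((ν b : ℚ) • B2.gen (res u)))

/-- `D` is the tame symbol `∂_ν : B₂(F) ⊗ Λ² F^× → B₂(K) ⊗ K^×`, where `D2` is the tame
symbol `∂_ν^{(2)}`. -/
def IsTameB2 (ν : F → ℤ) (res : F → K) (D2 : ⋀[ℚ]^2 (UnitsQ F) →ₗ[ℚ] UnitsQ K)
    (D : B2 F ⊗[ℚ] (⋀[ℚ]^2 (UnitsQ F)) →ₗ[ℚ] B2 K ⊗[ℚ] UnitsQ K) : Prop :=
  (∀ (a : F) (b : ⋀[ℚ]^2 (UnitsQ F)), a ≠ 0 → a ≠ 1 → ν a ≠ 0 → D (B2.gen a ⊗ₜ b) = 0) ∧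
  (∀ (u : F) (b : ⋀[ℚ]^2 (UnitsQ F)), u ≠ 0 → ν u = 0 →
    D (B2.gen u ⊗ₜ b) = -(B2.gen (res u) ⊗ₜ D2 b))

/-- `D` is the tame symbol `∂_ν : B₂(F) ⊗ Λ^{n+1} F^× → B₂(K) ⊗ Λ^n K^×`, where `Dn` is
the tame symbol `∂_ν^{(n+1)}`. -/
def IsTameBGen (ν : F → ℤ) (res : F → K) (n : ℕ)
    (Dn : ⋀[ℚ]^(n + 1) (UnitsQ F) →ₗ[ℚ] ⋀[ℚ]^n (UnitsQ K))
    (D : B2 F ⊗[ℚ] (⋀[ℚ]^(n + 1) (UnitsQ F)) →ₗ[ℚ] B2 K ⊗[ℚ] (⋀[ℚ]^n (UnitsQ K))) : Prop :=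
  (∀ (a : F) (b : ⋀[ℚ]^(n + 1) (UnitsQ F)), a ≠ 0 → a ≠ 1 → ν a ≠ 0 →
    D (B2.gen a ⊗ₜ b) = 0) ∧
  (∀ (u : F) (b : ⋀[ℚ]^(n + 1) (UnitsQ F)), u ≠ 0 → ν u = 0 →
    D (B2.gen u ⊗ₜ b) = -(B2.gen (res u) ⊗ₜ Dn b))

end Valuations

section Fields

variable (k F : Type u) [Field k] [Field F] [Algebra k F]

/-- `F` is a finitely generated extension of `k` of transcendence degree `1`. -/
def IsFields1 : Prop :=
  (∃ s : Finset F, IntermediateField.adjoin k (s : Set F) = ⊤) ∧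
  ∃ x : F, Transcendental k x ∧
    Algebra.IsAlgebraic (IntermediateField.adjoin k {x}) F

/-- `F` is a finitely generated extension of `k` of transcendence degree `2`. -/
def IsFields2 : Prop :=
  (∃ s : Finset F, IntermediateField.adjoin k (s : Set F) = ⊤) ∧
  ∃ x y : F, AlgebraicIndependent k ![x, y] ∧
    Algebra.IsAlgebraic (IntermediateField.adjoin k {x, y}) F

/-- `res : F → k` is the canonical residue map of `ν` onto `k`
(restricting to the identity on `k`). -/
def GoodResK (ν : F → ℤ) (res : F → k) : Prop :=
  IsResidue ν res ∧ ∀ c : k, res (algebraMap k F c) = c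

/-- The set `val(F)` of discrete valuations of `F` trivial on `k` with residue field `k`. -/
def ValInd : Type u :=
  {ν : F → ℤ // IsDVal ν ∧ (∀ c : k, c ≠ 0 → ν (algebraMap k F c) = 0) ∧
    ∃ res : F → k, GoodResK k F ν res}

/-- `h : Λ³ F^× → B₂(k)` is a lifted reciprocity map on `F ∈ Fields₁`:
(1) `-δ₂(h a) = Σ_{ν ∈ val(F)} ∂_ν^{(3)} a`;
(2) `h (δ₃ c) = Σ_{ν ∈ val(F)} ∂_ν c`;
(3) `h` vanishes on the image of `Λ² F^× ⊗ k^× → Λ³ F^×`. -/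
def IsLiftedRec (h : ⋀[ℚ]^3 (UnitsQ F) →ₗ[ℚ] B2 k) : Prop :=
  (∀ d2 : B2 k →ₗ[ℚ] ⋀[ℚ]^2 (UnitsQ k), IsDelta2 k d2 →
    ∀ res : ∀ _ : ValInd k F, F → k, (∀ v : ValInd k F, GoodResK k F v.1 (res v)) →
    ∀ D : ∀ _ : ValInd k F, ⋀[ℚ]^3 (UnitsQ F) →ₗ[ℚ] ⋀[ℚ]^2 (UnitsQ k),
      (∀ v : ValInd k F, IsTame v.1 (res v) 2 (D v)) →
    ∀ a : ⋀[ℚ]^3 (UnitsQ F), -(d2 (h a)) = ∑ᶠ v : ValInd k F, D v a) ∧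
  (∀ d3 : B2 F ⊗[ℚ] UnitsQ F →ₗ[ℚ] ⋀[ℚ]^3 (UnitsQ F), IsDelta3 F d3 →
    ∀ res : ∀ _ : ValInd k F, F → k, (∀ v : ValInd k F, GoodResK k F v.1 (res v)) →
    ∀ DB : ∀ _ : ValInd k F, B2 F ⊗[ℚ] UnitsQ F →ₗ[ℚ] B2 k,
      (∀ v : ValInd k F, IsTameB1 v.1 (res v) (DB v)) →
    ∀ c : B2 F ⊗[ℚ] UnitsQ F, h (d3 c) = ∑ᶠ v : ValInd k F, DB v c) ∧
  (∀ (y z : F) (c : k), y ≠ 0 → z ≠ 0 → c ≠ 0 →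
    h (wedgeF 3 ![y, z, algebraMap k F c]) = 0)

end Fields

/-- The degree `[K : j(F)]` of a field embedding. -/
noncomputable def fieldDeg {F K : Type u} [Field F] [Field K] (j : F →+* K) : ℕ :=
  letI : Algebra F K := j.toAlgebra
  Module.finrank F K

/-- The pullback `j^* h = (1/[F₂ : j(F₁)]) · h ∘ j_*` of a lifted reciprocity map. -/
noncomputable def pullRec (k F₁ F₂ : Type u) [Field k] [Field F₁] [Field F₂]
    (j : F₁ →+* F₂) (h : ⋀[ℚ]^3 (UnitsQ F₂) →ₗ[ℚ] B2 k) :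
    ⋀[ℚ]^3 (UnitsQ F₁) →ₗ[ℚ] B2 k :=
  ((fieldDeg j : ℚ))⁻¹ • (h ∘ₗ powMap 3 (unitsQMap j))

end ChowPrelim

noncomputable section ChowPrelim2

universe u

open scoped TensorProduct

/-- The monic irreducible polynomials over `F`, indexing the closed points of `𝔸¹_F`,
i.e. the general discrete valuations of `F(t)`. -/
def MonicIrr (F : Type u) [Field F] : Type u :=
  {p : Polynomial F // p.Monic ∧ Irreducible p}

/-- The residue field `F(p) = F[t]/(p)` of the valuation attached to a monic irreducible
polynomial `p`. -/
def ResField {F : Type u} [Field F] (p : MonicIrr F) : Type u := AdjoinRoot p.1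

noncomputable instance ResField.instField {F : Type u} [Field F] (p : MonicIrr F) :
    Field (ResField p) :=
  letI : Fact (Irreducible p.1) := ⟨p.2.2⟩
  inferInstanceAs (Field (AdjoinRoot p.1))

/-- `ν` is the discrete valuation of `F(t)` attached to the monic irreducible polynomial `p`. -/
def IsNuP {F : Type u} [Field F] (p : MonicIrr F) (ν : RatFunc F → ℤ) : Prop :=
  IsDVal ν ∧ ν (algebraMap (Polynomial F) (RatFunc F) p.1) = 1 ∧
    ∀ g : Polynomial F, g ≠ 0 → ¬(p.1 ∣ g) →
      ν (algebraMap (Polynomial F) (RatFunc F) g) = 0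

/-- `res` is the canonical residue map `F(t) → F(p)` of the valuation attached to `p`. -/
def IsResP {F : Type u} [Field F] (p : MonicIrr F) (ν : RatFunc F → ℤ)
    (res : RatFunc F → ResField p) : Prop :=
  IsResidue ν res ∧ ∀ g : Polynomial F,
    res (algebraMap (Polynomial F) (RatFunc F) g) =
      (AdjoinRoot.mk p.1 g : AdjoinRoot p.1)

/-- Bundled realization of the residue field of a discrete valuation `ν` on `L`
(trivial on `k`): a field `R` with a `k`-algebra structure together with the residue map. -/
structure ResData (k L : Type u) [Field k] [Field L] [Algebra k L] (ν : L → ℤ) :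
    Type (u + 1) where
  R : Type u
  [fieldR : Field R]
  [algR : Algebra k R]
  res : L → R
  isRes : IsResidue ν res
  compat : ∀ c : k, res (algebraMap k L c) = algebraMap k R c

attribute [instance] ResData.fieldR ResData.algR

/-- The set `dval(L)` of divisorial valuations of `L ∈ Fields₂`: discrete valuations trivial
on `k` whose residue field is a finitely generated extension of `k` of transcendence
degree `1`. -/
def DValInd (k L : Type u) [Field k] [Field L] [Algebra k L] : Type u :=
  {ν : L → ℤ // IsDVal ν ∧ (∀ c : k, c ≠ 0 → ν (algebraMap k L c) = 0) ∧
    ∃ rd : ResData k L ν, IsFields1 k rd.R}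

/-- A height-one prime ideal (in a domain). -/
def IsHeightOne {R : Type u} [CommRing R] (p : Ideal R) : Prop :=
  p.IsPrime ∧ p ≠ ⊥ ∧ ∀ q : Ideal R, q.IsPrime → q < p → q = ⊥

/-- `R/p` is regular, i.e. (for a one-dimensional local ring) the maximal ideal of `R/p`
is principal. -/
def QuotRegular {R : Type u} [CommRing R] [IsLocalRing R] (p : Ideal R) : Prop :=
  ∃ t : R, Ideal.map (Ideal.Quotient.mk p) (IsLocalRing.maximalIdeal R) =
    Ideal.span {Ideal.Quotient.mk p t}

/-- The height-one primes `p` of `R` with `R/p` regular. -/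
def RegPrimes (R : Type u) [CommRing R] [IsLocalRing R] : Type u :=
  {p : Ideal R // IsHeightOne p ∧ QuotRegular p}

instance RegPrimes.isPrime {R : Type u} [CommRing R] [IsLocalRing R] (p : RegPrimes R) :
    p.1.IsPrime := p.2.1.1

/-- The residue field `κ(p) = Frac(R/p)` of a prime `p`. -/
def ResFieldP {R : Type u} [CommRing R] [IsLocalRing R] [IsDomain R] (p : RegPrimes R) :
    Type u := FractionRing (R ⧸ p.1)

noncomputable instance ResFieldP.instField {R : Type u} [CommRing R] [IsLocalRing R]
    [IsDomain R] (p : RegPrimes R) : Field (ResFieldP p) :=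
  inferInstanceAs (Field (FractionRing (R ⧸ p.1)))

/-- `ν` is the discrete valuation `ν_p` of `L = Frac R` attached to a height-one prime `p`:
it is nonnegative on `R` and positive exactly on `p`. -/
def IsNuPrime {R L : Type u} [CommRing R] [Field L] [Algebra R L] (p : Ideal R)
    (ν : L → ℤ) : Prop :=
  IsDVal ν ∧ (∀ x : R, x ≠ 0 → 0 ≤ ν (algebraMap R L x)) ∧
    ∀ x : R, x ≠ 0 → (x ∈ p ↔ 0 < ν (algebraMap R L x))

/-- `res` is the canonical residue map `L → κ(p)` of the valuation `ν_p`. -/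
def IsResPrime {R L : Type u} [CommRing R] [IsLocalRing R] [IsDomain R] [Field L]
    [Algebra R L] (p : RegPrimes R) (ν : L → ℤ) (res : L → ResFieldP p) : Prop :=
  IsResidue ν res ∧ ∀ x : R,
    res (algebraMap R L x) =
      algebraMap (R ⧸ p.1) (FractionRing (R ⧸ p.1)) (Ideal.Quotient.mk p.1 x)

/-- `ν̄` is the discrete valuation of `κ(p)` attached to the discrete valuation ring `R/p`:
nonnegative on `R/p` and positive exactly on the image of the maximal ideal of `R`. -/
def IsNuBar {R : Type u} [CommRing R] [IsLocalRing R] [IsDomain R] (p : RegPrimes R)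
    (ν : ResFieldP p → ℤ) : Prop :=
  IsDVal ν ∧
  (∀ x : R ⧸ p.1, x ≠ 0 →
    0 ≤ ν (algebraMap (R ⧸ p.1) (FractionRing (R ⧸ p.1)) x)) ∧
  ∀ x : R, Ideal.Quotient.mk p.1 x ≠ 0 →
    (x ∈ IsLocalRing.maximalIdeal R ↔
      0 < ν (algebraMap (R ⧸ p.1) (FractionRing (R ⧸ p.1)) (Ideal.Quotient.mk p.1 x)))

/-- `res` is the canonical residue map `κ(p) → k` of the valuation `ν̄_p`
(restricting to the identity on `k`). -/
def IsResBar {k R : Type u} [Field k] [CommRing R] [IsLocalRing R] [IsDomain R]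
    [Algebra k R] (p : RegPrimes R) (ν : ResFieldP p → ℤ) (res : ResFieldP p → k) : Prop :=
  IsResidue ν res ∧ ∀ c : k,
    res (algebraMap (R ⧸ p.1) (FractionRing (R ⧸ p.1))
      (Ideal.Quotient.mk p.1 (algebraMap k R c))) = c

/-- The Steinberg relations subspace of `Λ^n F^×` (with ℚ-coefficients). -/
def MilnorRel (F : Type u) [Field F] : (n : ℕ) → Submodule ℚ (⋀[ℚ]^n (UnitsQ F))
  | 0 => ⊥
  | 1 => ⊥
  | (m + 2) => Submodule.span ℚ
      {x | ∃ (a : F) (v : Fin m → F), a ≠ 0 ∧ a ≠ 1 ∧ (∀ i, v i ≠ 0) ∧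
        x = wedgeF (m + 2) (Fin.cons a (Fin.cons (1 - a) v))}

/-- The rational Milnor K-group `K_n^M(F) ⊗ ℚ`: the quotient of `Λ^n F^×` by the
Steinberg relations. -/
def MilnorQ (F : Type u) [Field F] (n : ℕ) : Type u :=
  (⋀[ℚ]^n (UnitsQ F)) ⧸ MilnorRel F n

noncomputable instance MilnorQ.instAddCommGroup (F : Type u) [Field F] (n : ℕ) :
    AddCommGroup (MilnorQ F n) :=
  inferInstanceAs (AddCommGroup ((⋀[ℚ]^n (UnitsQ F)) ⧸ MilnorRel F n))

noncomputable instance MilnorQ.instModule (F : Type u) [Field F] (n : ℕ) :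
    Module ℚ (MilnorQ F n) :=
  inferInstanceAs (Module ℚ ((⋀[ℚ]^n (UnitsQ F)) ⧸ MilnorRel F n))

/-- The class of an element of `Λ^n F^×` in `K_n^M(F) ⊗ ℚ`. -/
def MilnorQ.mk {F : Type u} [Field F] {n : ℕ} (x : ⋀[ℚ]^n (UnitsQ F)) : MilnorQ F n :=
  Submodule.Quotient.mk x

end ChowPrelim2

open scoped TensorProduct

universe u

section Aux

universe v
variable {K : Type v} [Field K]

theorem mkQ_mul {x y : K} (hx : x ≠ 0) (hy : y ≠ 0) :
    mkQ (x * y) = mkQ x + mkQ y := by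
  simp only [mkQ, dif_neg hx, dif_neg hy, dif_neg (mul_ne_zero hx hy)]
  have : Units.mk0 (x * y) (mul_ne_zero hx hy) = Units.mk0 x hx * Units.mk0 y hy :=
    Units.ext rfl
  rw [this]
  have : Additive.ofMul (Units.mk0 x hx * Units.mk0 y hy) =
      Additive.ofMul (Units.mk0 x hx) + Additive.ofMul (Units.mk0 y hy) := rfl
  rw [this, TensorProduct.tmul_add]

theorem mem_span_mkQ (v : UnitsQ K) :
    v ∈ Submodule.span ℚ {y : UnitsQ K | ∃ x : K, x ≠ 0 ∧ y = mkQ x} := by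
  induction v using TensorProduct.induction_on with
  | zero => exact Submodule.zero_mem _
  | add x y hx hy => exact Submodule.add_mem _ hx hy
  | tmul q m =>
    have h1 : (q : ℚ) ⊗ₜ[ℤ] m = q • ((1 : ℚ) ⊗ₜ[ℤ] m) := by
      rw [TensorProduct.smul_tmul', smul_eq_mul, mul_one]
    rw [h1]
    refine Submodule.smul_mem _ _ (Submodule.subset_span ?_)
    refine ⟨((Additive.toMul m : Kˣ) : K), Units.ne_zero _, ?_⟩
    simp only [mkQ, dif_neg (Units.ne_zero (Additive.toMul m))]
    congr 1
    rw [show Units.mk0 ((Additive.toMul m : Kˣ) : K) (Units.ne_zero _) = Additive.toMul m from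
      Units.ext rfl]
    rfl

end Aux
section Aux2

universe v
variable {M N : Type v} [AddCommGroup M] [Module ℚ M] [AddCommGroup N] [Module ℚ N]

theorem multilin_span {n : ℕ} (f : MultilinearMap ℚ (fun _ : Fin n => M) N) (s : Set M)
    (v : Fin n → M) (hv : ∀ i, v i ∈ Submodule.span ℚ s) :
    f v ∈ Submodule.span ℚ {y : N | ∃ w : Fin n → M, (∀ i, w i ∈ s) ∧ y = f w} := by
  set T := Submodule.span ℚ {y : N | ∃ w : Fin n → M, (∀ i, w i ∈ s) ∧ y = f w} with hT
  suffices H : ∀ j : ℕ, ∀ v : Fin n → M, (∀ i : Fin n, j ≤ (i : ℕ) → v i ∈ s) →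
      (∀ i, v i ∈ Submodule.span ℚ s) → f v ∈ T by
    exact H n v (fun i hi => absurd hi (not_le.2 i.isLt)) hv
  intro j
  induction j with
  | zero =>
    intro v h _
    exact Submodule.subset_span ⟨v, fun i => h i (Nat.zero_le _), rfl⟩
  | succ j IH =>
    intro v hges hsp
    by_cases hjn : j < n
    · set jf : Fin n := ⟨j, hjn⟩
      have key : ∀ y ∈ Submodule.span ℚ s, f (Function.update v jf y) ∈ T := by
        intro y hy
        induction hy using Submodule.span_induction with
        | mem y hmem =>
          refine IH (Function.update v jf y) ?_ ?_
          · intro i hi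
            rcases eq_or_ne i jf with rfl | hne
            · rwa [Function.update_self]
            · rw [Function.update_of_ne hne]
              refine hges i ?_
              rcases Nat.lt_or_ge (i : ℕ) (j+1) with h | h
              · exact absurd (Fin.ext (Nat.le_antisymm (Nat.lt_succ_iff.1 h) hi)) hne
              · exact h
          · intro i
            rcases eq_or_ne i jf with rfl | hne
            · rw [Function.update_self]; exact Submodule.subset_span hmem
            · rw [Function.update_of_ne hne]; exact hsp i
        | zero => rw [f.map_update_zero]; exact Submodule.zero_mem _
        | add y z _ _ hy hz => rw [f.map_update_add]; exact Submodule.add_mem _ hy hz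
        | smul c y _ hy => rw [f.map_update_smul]; exact Submodule.smul_mem _ _ hy
      have := key (v jf) (hsp jf)
      rwa [Function.update_eq_self] at this
    · exact IH v (fun i hi => absurd (lt_of_le_of_lt hi i.isLt) hjn) hsp

end Aux2
section Aux3

universe v

/-- The wedge multilinear map valued in the `n`-th exterior power submodule. -/
noncomputable def wedgeM (M : Type v) [AddCommGroup M] [Module ℚ M] (n : ℕ) :
    MultilinearMap ℚ (fun _ : Fin n => M) ↥(⋀[ℚ]^n M) :=
  ((ExteriorAlgebra.ιMulti ℚ n (M := M)).toMultilinearMap).codRestrict (⋀[ℚ]^n M)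
    (fun v => ExteriorAlgebra.ιMulti_range ℚ n ⟨v, rfl⟩)

theorem wedgeM_apply {M : Type v} [AddCommGroup M] [Module ℚ M] (n : ℕ) (v : Fin n → M) :
    wedgeM M n v = wedgeV n v := rfl

theorem wedgeM_span (M : Type v) [AddCommGroup M] [Module ℚ M] (n : ℕ) :
    Submodule.span ℚ (Set.range (wedgeM M n)) = ⊤ := by
  apply Submodule.map_injective_of_injective (Submodule.injective_subtype (⋀[ℚ]^n M))
  rw [Submodule.map_span, Submodule.map_top, Submodule.range_subtype]
  have himg : (⋀[ℚ]^n M).subtype '' Set.range (wedgeM M n) =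
      Set.range (ExteriorAlgebra.ιMulti ℚ n (M := M)) := by
    ext x
    constructor
    · rintro ⟨y, ⟨v, rfl⟩, rfl⟩; exact ⟨v, rfl⟩
    · rintro ⟨v, rfl⟩; exact ⟨wedgeM M n v, ⟨v, rfl⟩, rfl⟩
  rw [himg, ExteriorAlgebra.ιMulti_span_fixedDegree]

theorem wedgeF_span {K : Type v} [Field K] (n : ℕ) (c : ↥(⋀[ℚ]^n (UnitsQ K))) :
    c ∈ Submodule.span ℚ
      {y : ↥(⋀[ℚ]^n (UnitsQ K)) | ∃ w : Fin n → K, (∀ i, w i ≠ 0) ∧ y = wedgeF n w} := by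
  have hc : c ∈ Submodule.span ℚ (Set.range (wedgeM (UnitsQ K) n)) := by
    rw [wedgeM_span]; exact Submodule.mem_top
  induction hc using Submodule.span_induction with
  | mem y hmem =>
    obtain ⟨v, rfl⟩ := hmem
    have h1 := multilin_span (wedgeM (UnitsQ K) n)
      {y : UnitsQ K | ∃ x : K, x ≠ 0 ∧ y = mkQ x} v (fun i => mem_span_mkQ (v i))
    refine Submodule.span_le.2 ?_ h1
    rintro _ ⟨w, hw, rfl⟩
    refine Submodule.subset_span ?_
    choose x hx0 hxw using hw
    refine ⟨x, hx0, ?_⟩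
    have : w = fun i => mkQ (x i) := funext hxw
    rw [this]
    rfl
  | zero => exact Submodule.zero_mem _
  | add y z _ _ hy hz => exact Submodule.add_mem _ hy hz
  | smul q y _ hy => exact Submodule.smul_mem _ _ hy

end Aux3
section Aux4

universe v
variable {K : Type v} [Field K]

theorem B2.gen_zero : B2.gen (0 : K) = 0 := by
  rw [B2.gen, Submodule.Quotient.mk_eq_zero]
  exact Submodule.subset_span (Or.inl (by simp))

theorem B2.gen_one : B2.gen (1 : K) = 0 := by
  rw [B2.gen, Submodule.Quotient.mk_eq_zero]
  exact Submodule.subset_span (Or.inl (by simp))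

theorem B2.mk_none : (Submodule.Quotient.mk (Finsupp.single (none : Option K) 1) : B2 K) = 0 := by
  rw [Submodule.Quotient.mk_eq_zero]
  exact Submodule.subset_span (Or.inl (by simp))

theorem B2_span (b : B2 K) :
    b ∈ Submodule.span ℚ {y : B2 K | ∃ x : K, x ≠ 0 ∧ x ≠ 1 ∧ y = B2.gen x} := by
  obtain ⟨f, rfl⟩ := Submodule.Quotient.mk_surjective (B2Rel K) b
  induction f using Finsupp.induction_linear with
  | zero => rw [Submodule.Quotient.mk_zero]; exact Submodule.zero_mem _
  | add f g hf hg =>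
    rw [Submodule.Quotient.mk_add]; exact Submodule.add_mem _ hf hg
  | single o r =>
    have h1 : Finsupp.single o r = r • Finsupp.single o (1 : ℚ) := by
      rw [Finsupp.smul_single, smul_eq_mul, mul_one]
    rw [h1, Submodule.Quotient.mk_smul]
    refine Submodule.smul_mem _ _ ?_
    match o with
    | none => rw [B2.mk_none]; exact Submodule.zero_mem _
    | some x =>
      by_cases hx0 : x = 0
      · subst hx0
        rw [show (Submodule.Quotient.mk (Finsupp.single (some (0:K)) 1) : B2 K) =
          B2.gen 0 from rfl, B2.gen_zero]
        exact Submodule.zero_mem _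
      by_cases hx1 : x = 1
      · subst hx1
        rw [show (Submodule.Quotient.mk (Finsupp.single (some (1:K)) 1) : B2 K) =
          B2.gen 1 from rfl, B2.gen_one]
        exact Submodule.zero_mem _
      exact Submodule.subset_span ⟨x, hx0, hx1, rfl⟩

theorem tensor_span (n : ℕ) (t : B2 K ⊗[ℚ] ↥(⋀[ℚ]^n (UnitsQ K))) :
    t ∈ Submodule.span ℚ
      {y | ∃ (x : K) (w : Fin n → K), x ≠ 0 ∧ x ≠ 1 ∧ (∀ i, w i ≠ 0) ∧
        y = B2.gen x ⊗ₜ[ℚ] wedgeF n w} := by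
  set T := Submodule.span ℚ
      {y | ∃ (x : K) (w : Fin n → K), x ≠ 0 ∧ x ≠ 1 ∧ (∀ i, w i ≠ 0) ∧
        y = B2.gen x ⊗ₜ[ℚ] wedgeF n w} with hT
  have step1 : ∀ (x : K), x ≠ 0 → x ≠ 1 → ∀ c : ↥(⋀[ℚ]^n (UnitsQ K)),
      B2.gen x ⊗ₜ[ℚ] c ∈ T := by
    intro x hx0 hx1 c
    have hc := wedgeF_span n c
    induction hc using Submodule.span_induction with
    | mem y hmem =>
      obtain ⟨w, hw, rfl⟩ := hmem
      exact Submodule.subset_span ⟨x, w, hx0, hx1, hw, rfl⟩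
    | zero => rw [TensorProduct.tmul_zero]; exact Submodule.zero_mem _
    | add y z _ _ hy hz =>
      rw [TensorProduct.tmul_add]; exact Submodule.add_mem _ hy hz
    | smul q y _ hy =>
      rw [TensorProduct.tmul_smul]; exact Submodule.smul_mem _ _ hy
  have step2 : ∀ (b : B2 K) (c : ↥(⋀[ℚ]^n (UnitsQ K))), b ⊗ₜ[ℚ] c ∈ T := by
    intro b c
    have hb := B2_span b
    induction hb using Submodule.span_induction with
    | mem y hmem =>
      obtain ⟨x, hx0, hx1, rfl⟩ := hmem
      exact step1 x hx0 hx1 c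
    | zero => rw [TensorProduct.zero_tmul]; exact Submodule.zero_mem _
    | add y z _ _ hy hz =>
      rw [TensorProduct.add_tmul]; exact Submodule.add_mem _ hy hz
    | smul q y _ hy =>
      rw [← TensorProduct.smul_tmul']; exact Submodule.smul_mem _ _ hy
  induction t using TensorProduct.induction_on with
  | zero => exact Submodule.zero_mem _
  | tmul b c => exact step2 b c
  | add y z hy hz => exact Submodule.add_mem _ hy hz

end Aux4
section Aux5

universe v
variable {F K : Type v} [Field F] [Field K]

theorem wedgeF_cons_eq {n : ℕ} (a : F) (u : Fin (n+1) → F) :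
    (fun i => mkQ (Fin.cons a (Fin.tail u) i)) =
      Fin.cons (mkQ a) (fun i : Fin n => mkQ (u i.succ)) := by
  funext i
  refine Fin.cases ?_ (fun j => ?_) i
  · rw [Fin.cons_zero, Fin.cons_zero]
  · rw [Fin.cons_succ, Fin.cons_succ, Fin.tail]

theorem wedgeF_cons_add {n : ℕ} {x y : F} (hx : x ≠ 0) (hy : y ≠ 0)
    (u : Fin (n+1) → F) :
    wedgeF (n+1) (Fin.cons (x * y) (Fin.tail u)) =
      wedgeF (n+1) (Fin.cons x (Fin.tail u)) + wedgeF (n+1) (Fin.cons y (Fin.tail u)) := by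
  apply Subtype.ext
  rw [Submodule.coe_add]
  show ExteriorAlgebra.ιMulti ℚ (n+1) (fun i => mkQ (Fin.cons (x*y) (Fin.tail u) i)) =
    ExteriorAlgebra.ιMulti ℚ (n+1) (fun i => mkQ (Fin.cons x (Fin.tail u) i)) +
    ExteriorAlgebra.ιMulti ℚ (n+1) (fun i => mkQ (Fin.cons y (Fin.tail u) i))
  rw [wedgeF_cons_eq, wedgeF_cons_eq, wedgeF_cons_eq, mkQ_mul hx hy]
  have h := AlternatingMap.map_update_add (f := ExteriorAlgebra.ιMulti ℚ (n+1))
    (v := Fin.cons (mkQ x) (fun i : Fin n => mkQ (u i.succ))) 0 (mkQ x) (mkQ y)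
  simpa only [Fin.update_cons_zero] using h

set_option synthInstance.maxHeartbeats 1000000 in
theorem tame_units {ν : F → ℤ} {res : F → K} {n : ℕ}
    {D : ↥(⋀[ℚ]^(n+1) (UnitsQ F)) →ₗ[ℚ] ↥(⋀[ℚ]^n (UnitsQ K))}
    (hν : IsDVal ν) (hD : IsTame ν res n D) (u : Fin (n+1) → F)
    (hu : ∀ i, u i ≠ 0 ∧ ν (u i) = 0) : D (wedgeF (n+1) u) = 0 := by
  obtain ⟨π, hπ0, hπ1⟩ := hν.surj 1
  have hu0 : u 0 ≠ 0 := (hu 0).1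
  have htail : ∀ i : Fin n, Fin.tail u i ≠ 0 ∧ ν (Fin.tail u i) = 0 := fun i => hu i.succ
  have hmul0 : π * u 0 ≠ 0 := mul_ne_zero hπ0 hu0
  have hmul1 : ν (π * u 0) = 1 := by
    rw [hν.map_mul π (u 0) hπ0 hu0, hπ1, (hu 0).2, add_zero]
  have e1 := hD (π * u 0) (Fin.tail u) hmul0 hmul1 htail
  have e2 := hD π (Fin.tail u) hπ0 hπ1 htail
  have e3 := wedgeF_cons_add hπ0 hu0 u
  have e4 : D (wedgeF (n+1) (Fin.cons (π * u 0) (Fin.tail u))) =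
      D (wedgeF (n+1) (Fin.cons π (Fin.tail u))) +
      D (wedgeF (n+1) (Fin.cons (u 0) (Fin.tail u))) := by
    rw [e3, map_add]
  rw [e1, e2] at e4
  have e5 : D (wedgeF (n+1) (Fin.cons (u 0) (Fin.tail u))) = 0 := by
    have := e4.symm
    rwa [add_eq_left] at this
  rwa [Fin.cons_self_tail u] at e5

end Aux5
section Aux6

universe v
variable {F : Type v} [Field F]

theorem monicIrr_eq_of_dvd {p q : MonicIrr F} (h : p.1 ∣ q.1) : p = q := by
  obtain ⟨c, hc⟩ := h
  rcases q.2.2.isUnit_or_isUnit hc with hu | hu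
  · exact absurd hu p.2.2.not_isUnit
  · have hassoc : Associated p.1 q.1 := ⟨hu.unit, by rw [IsUnit.unit_spec]; exact hc.symm⟩
    exact Subtype.ext (Polynomial.eq_of_monic_of_associated p.2.1 q.2.1 hassoc)

theorem monicIrr_divisors_finite {f : Polynomial F} (hf : f ≠ 0) :
    {q : MonicIrr F | q.1 ∣ f}.Finite := by
  classical
  set φ : MonicIrr F → Polynomial F := fun q =>
    if h : q.1 ∣ f then
      Classical.choose (UniqueFactorizationMonoid.exists_mem_factors_of_dvd hf q.2.2 h)
    else 1 with hφ
  have hspec : ∀ q : MonicIrr F, q.1 ∣ f →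
      φ q ∈ UniqueFactorizationMonoid.factors f ∧ Associated q.1 (φ q) := by
    intro q hq
    have := Classical.choose_spec
      (UniqueFactorizationMonoid.exists_mem_factors_of_dvd hf q.2.2 hq)
    rw [hφ]; simp only [dif_pos hq]
    exact this
  apply Set.Finite.of_finite_image (f := φ)
  · apply Set.Finite.subset ((UniqueFactorizationMonoid.factors f).toFinset.finite_toSet)
    rintro _ ⟨q, hq, rfl⟩
    simpa using (hspec q hq).1
  · intro q₁ h₁ q₂ h₂ heq
    have a1 := (hspec q₁ h₁).2
    have a2 := (hspec q₂ h₂).2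
    rw [heq] at a1
    have : Associated q₁.1 q₂.1 := a1.trans a2.symm
    exact Subtype.ext (Polynomial.eq_of_monic_of_associated q₁.2.1 q₂.2.1 this)

theorem monicIrr_not_dvd_of_degree_lt {q : MonicIrr F} {g : Polynomial F} (hg : g ≠ 0)
    (hdeg : g.natDegree < q.1.natDegree) : ¬ q.1 ∣ g := by
  intro hdvd
  have := Polynomial.natDegree_le_of_dvd hdvd hg
  omega

end Aux6
section Aux7

universe v
variable {F : Type v} [Field F]

theorem monicIrr_ne_one (p : MonicIrr F) : p.1 ≠ 1 :=
  fun h => p.2.2.not_isUnit (h ▸ isUnit_one)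

theorem lift_residue (p : MonicIrr F) {y : ResField p} (hy : y ≠ 0) :
    ∃ g : Polynomial F, g ≠ 0 ∧ g.natDegree < p.1.natDegree ∧
      (AdjoinRoot.mk p.1 g : AdjoinRoot p.1) = y := by
  obtain ⟨g₀, hg₀⟩ := AdjoinRoot.mk_surjective (g := p.1) y
  refine ⟨g₀ %ₘ p.1, ?_, ?_, ?_⟩
  case refine_3 =>
    have hdiv := Polynomial.modByMonic_add_div g₀ p.1
    calc (AdjoinRoot.mk p.1 (g₀ %ₘ p.1) : AdjoinRoot p.1)
        = AdjoinRoot.mk p.1 (g₀ %ₘ p.1) + AdjoinRoot.mk p.1 p.1 * AdjoinRoot.mk p.1 (g₀ /ₘ p.1) := by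
          rw [AdjoinRoot.mk_self, zero_mul, add_zero]
      _ = AdjoinRoot.mk p.1 (g₀ %ₘ p.1 + p.1 * (g₀ /ₘ p.1)) := by rw [map_add, map_mul]
      _ = (show AdjoinRoot p.1 from y) := by rw [hdiv, hg₀]
  case refine_1 =>
    intro h0
    apply hy
    have hdiv := Polynomial.modByMonic_add_div g₀ p.1
    rw [← hg₀, ← hdiv, h0, zero_add, map_mul, AdjoinRoot.mk_self, zero_mul]
    rfl
  case refine_2 =>
    exact Polynomial.natDegree_modByMonic_lt g₀ p.2.1 (monicIrr_ne_one p)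

end Aux7
set_option maxHeartbeats 4000000 in
set_option synthInstance.maxHeartbeats 1000000 in
/-- surjectivity of the total tame-symbol map
`B₂(F(t)) ⊗ Λ^{m-2} F(t)^× → ⊕_p B₂(F(p)) ⊗ Λ^{m-3} F(p)^×`, `m = n + 3 ≥ 3`. -/
theorem statement_6 (k F : Type u) [Field k] [IsAlgClosed k] [CharZero k] [Field F]
    [Algebra k F] (hF : IsFields1 k F) (n : ℕ)
    (ν : ∀ p : MonicIrr F, RatFunc F → ℤ) (hν : ∀ p, IsNuP p (ν p))
    (res : ∀ p : MonicIrr F, RatFunc F → ResField p) (hres : ∀ p, IsResP p (ν p) (res p))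
    (D2 : ∀ p : MonicIrr F,
      ⋀[ℚ]^(n + 1) (UnitsQ (RatFunc F)) →ₗ[ℚ] ⋀[ℚ]^n (UnitsQ (ResField p)))
    (hD2 : ∀ p, IsTame (ν p) (res p) n (D2 p))
    (D : ∀ p : MonicIrr F,
      B2 (RatFunc F) ⊗[ℚ] (⋀[ℚ]^(n + 1) (UnitsQ (RatFunc F))) →ₗ[ℚ]
        B2 (ResField p) ⊗[ℚ] (⋀[ℚ]^n (UnitsQ (ResField p))))
    (hD : ∀ p, IsTameBGen (ν p) (res p) n (D2 p) (D p))
    (a : ∀ p : MonicIrr F, B2 (ResField p) ⊗[ℚ] (⋀[ℚ]^n (UnitsQ (ResField p))))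
    (ha : {p | a p ≠ 0}.Finite) :
    ∃ b : B2 (RatFunc F) ⊗[ℚ] (⋀[ℚ]^(n + 1) (UnitsQ (RatFunc F))), ∀ p, D p b = a p := by
  classical
  -- "good" elements relative to a point p
  let Good : MonicIrr F → (B2 (RatFunc F) ⊗[ℚ] ↥(⋀[ℚ]^(n + 1) (UnitsQ (RatFunc F)))) → Prop :=
    fun p b => (∀ q, q ≠ p → p.1.natDegree ≤ q.1.natDegree → D q b = 0) ∧
      {q | D q b ≠ 0}.Finite
  have Good_zero : ∀ p, Good p 0 := by
    intro p
    refine ⟨fun q _ _ => map_zero _, ?_⟩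
    have : {q | D q (0 : B2 (RatFunc F) ⊗[ℚ] ↥(⋀[ℚ]^(n + 1) (UnitsQ (RatFunc F)))) ≠ 0} = ∅ := by
      ext q; simp
    rw [this]; exact Set.finite_empty
  have Good_add : ∀ p b c, Good p b → Good p c → Good p (b + c) := by
    rintro p b c ⟨hb1, hb2⟩ ⟨hc1, hc2⟩
    refine ⟨fun q hq hd => by rw [map_add, hb1 q hq hd, hc1 q hq hd, add_zero], ?_⟩
    apply Set.Finite.subset (hb2.union hc2)
    intro q hq
    by_contra hcon
    simp only [Set.mem_union, Set.mem_setOf_eq, not_or, not_not] at hcon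
    simp only [Set.mem_setOf_eq, map_add, hcon.1, hcon.2, add_zero, not_not] at hq
    exact hq rfl
  have Good_smul : ∀ p (r : ℚ) b, Good p b → Good p (r • b) := by
    rintro p r b ⟨hb1, hb2⟩
    refine ⟨fun q hq hd => by rw [map_smul, hb1 q hq hd, smul_zero], ?_⟩
    apply Set.Finite.subset hb2
    intro q hq
    simp only [Set.mem_setOf_eq, map_smul] at hq ⊢
    intro h0
    exact hq (by rw [h0, smul_zero])
  have Good_neg : ∀ p b, Good p b → Good p (-b) := by
    intro p b hb
    have h := Good_smul p (-1) b hb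
    rw [show -b = (-1 : ℚ) • b by module]
    exact h
  -- the pointwise surjectivity with control
  have point : ∀ (p : MonicIrr F) (x : B2 (ResField p) ⊗[ℚ] ↥(⋀[ℚ]^n (UnitsQ (ResField p)))),
      ∃ b, D p b = x ∧ Good p b := by
    intro p x
    have hx := tensor_span n x
    induction hx using Submodule.span_induction with
    | zero => exact ⟨0, map_zero _, Good_zero p⟩
    | add y z _ _ ihy ihz =>
      obtain ⟨b1, hb1, hg1⟩ := ihy
      obtain ⟨b2, hb2, hg2⟩ := ihz
      exact ⟨b1 + b2, by rw [map_add, hb1, hb2], Good_add p _ _ hg1 hg2⟩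
    | smul r y _ ihy =>
      obtain ⟨b1, hb1, hg1⟩ := ihy
      exact ⟨r • b1, by rw [map_smul, hb1], Good_smul p r _ hg1⟩
    | mem y hy =>
      obtain ⟨z, w, hz0, hz1, hw, rfl⟩ := hy
      obtain ⟨g, hg0, hgdeg, hgmk⟩ := lift_residue p hz0
      choose gi hgi0 hgideg hgimk using fun i => lift_residue p (hw i)
      set u : RatFunc F := algebraMap (Polynomial F) (RatFunc F) g with hu
      set P : RatFunc F := algebraMap (Polynomial F) (RatFunc F) p.1 with hP
      set v : Fin n → RatFunc F := fun i => algebraMap (Polynomial F) (RatFunc F) (gi i) with hv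
      have hu0 : u ≠ 0 := RatFunc.algebraMap_ne_zero hg0
      have hP0 : P ≠ 0 := RatFunc.algebraMap_ne_zero p.2.2.ne_zero
      have hv0 : ∀ i, v i ≠ 0 := fun i => RatFunc.algebraMap_ne_zero (hgi0 i)
      -- vanishing of D2 q on the chosen wedge for q away from p
      have hvanish2 : ∀ q : MonicIrr F, q ≠ p → (∀ i, ¬ q.1 ∣ gi i) →
          D2 q (wedgeF (n+1) (Fin.cons P v)) = 0 := by
        intro q hqp hqgi
        refine tame_units (hν q).1 (hD2 q) _ ?_
        intro i
        refine Fin.cases ?_ (fun j => ?_) i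
        · rw [Fin.cons_zero]
          refine ⟨hP0, (hν q).2.2 p.1 p.2.2.ne_zero ?_⟩
          exact fun hdvd => hqp (monicIrr_eq_of_dvd hdvd)
        · rw [Fin.cons_succ]
          exact ⟨hv0 j, (hν q).2.2 (gi j) (hgi0 j) (hqgi j)⟩
      have hvanish : ∀ q : MonicIrr F, q ≠ p → ¬ q.1 ∣ g → (∀ i, ¬ q.1 ∣ gi i) →
          D q (B2.gen u ⊗ₜ[ℚ] wedgeF (n+1) (Fin.cons P v)) = 0 := by
        intro q hqp hqg hqgi
        rw [(hD q).2 u _ hu0 ((hν q).2.2 g hg0 hqg), hvanish2 q hqp hqgi,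
          TensorProduct.tmul_zero]
        module
      have hgood : Good p (B2.gen u ⊗ₜ[ℚ] wedgeF (n+1) (Fin.cons P v)) := by
        constructor
        · -- vanishing at q ≠ p of degree ≥ deg p
          intro q hqp hdeg
          refine hvanish q hqp ?_ ?_
          · exact monicIrr_not_dvd_of_degree_lt hg0 (lt_of_lt_of_le hgdeg hdeg)
          · exact fun i => monicIrr_not_dvd_of_degree_lt (hgi0 i) (lt_of_lt_of_le (hgideg i) hdeg)
        · -- finiteness of the support
          have hprod0 : g * (p.1 * ∏ i, gi i) ≠ 0 :=
            mul_ne_zero hg0 (mul_ne_zero p.2.2.ne_zero (Finset.prod_ne_zero_iff.2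
              (fun i _ => hgi0 i)))
          apply Set.Finite.subset (monicIrr_divisors_finite hprod0)
          intro q hq
          by_contra hndvd
          simp only [Set.mem_setOf_eq] at hndvd hq
          apply hq
          have hqg : ¬ q.1 ∣ g := fun h => hndvd (h.mul_right _)
          have hqp1 : ¬ q.1 ∣ p.1 := fun h => hndvd ((h.mul_right _).mul_left _)
          have hqgi : ∀ i, ¬ q.1 ∣ gi i := fun i h =>
            hndvd (((h.trans (Finset.dvd_prod_of_mem _ (Finset.mem_univ i))).mul_left _).mul_left _)
          have hqp : q ≠ p := fun h => hqp1 (h ▸ dvd_rfl)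
          exact hvanish q hqp hqg hqgi
      refine ⟨(-1 : ℚ) • (B2.gen u ⊗ₜ[ℚ] wedgeF (n+1) (Fin.cons P v)), ?_,
        Good_smul p _ _ hgood⟩
      -- D p of the lift
      have hpu : ¬ p.1 ∣ g := monicIrr_not_dvd_of_degree_lt hg0 hgdeg
      have hνu : ν p u = 0 := (hν p).2.2 g hg0 hpu
      have hD2p : D2 p (wedgeF (n+1) (Fin.cons P v)) = wedgeF n (fun i => res p (v i)) :=
        hD2 p P v hP0 (hν p).2.1 (fun i => ⟨hv0 i,
          (hν p).2.2 (gi i) (hgi0 i) (monicIrr_not_dvd_of_degree_lt (hgi0 i) (hgideg i))⟩)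
      have hresv : (fun i => res p (v i)) = w := by
        funext i
        rw [hv]
        rw [(hres p).2 (gi i)]
        exact hgimk i
      have hresu : res p u = z := by
        rw [hu, (hres p).2 g]
        exact hgmk
      rw [map_smul, (hD p).2 u _ hu0 hνu, hD2p, hresv, hresu]
      module
  -- the degree induction
  have key : ∀ d : ℕ,
      ∀ a' : (∀ p : MonicIrr F, B2 (ResField p) ⊗[ℚ] ↥(⋀[ℚ]^n (UnitsQ (ResField p)))),
      {p | a' p ≠ 0}.Finite → (∀ p, a' p ≠ 0 → p.1.natDegree ≤ d) →
      ∃ b, ∀ p, D p b = a' p := by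
    intro d
    induction d with
    | zero =>
      intro a' _ hdeg
      refine ⟨0, fun p => ?_⟩
      rw [map_zero]
      by_contra h
      have h1 := hdeg p (fun h0 => h h0.symm)
      have h2 := p.2.2.natDegree_pos
      omega
    | succ d IH =>
      intro a' hfin hdeg
      choose bp hbpD hbpG using fun p : MonicIrr F => point p (a' p)
      set S : Finset (MonicIrr F) := hfin.toFinset.filter (fun p => p.1.natDegree = d + 1)
        with hS
      set b₁ := ∑ p ∈ S, bp p with hb₁
      have hDb₁ : ∀ q, D q b₁ = ∑ p ∈ S, D q (bp p) := fun q => map_sum (D q) _ _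
      set a₂ : ∀ p : MonicIrr F, B2 (ResField p) ⊗[ℚ] ↥(⋀[ℚ]^n (UnitsQ (ResField p))) :=
        fun q => a' q - D q b₁ with ha₂
      have hfin₂ : {q | a₂ q ≠ 0}.Finite := by
        apply Set.Finite.subset (hfin.union
          (Set.Finite.biUnion S.finite_toSet (fun p _ => (hbpG p).2)))
        intro q hq
        by_contra hcon
        simp only [Set.mem_union, Set.mem_setOf_eq, Set.mem_iUnion, not_or, not_exists,
          not_not] at hcon
        obtain ⟨h1, h2⟩ := hcon
        simp only [Set.mem_setOf_eq, ha₂, not_not] at hq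
        apply hq
        rw [hDb₁, Finset.sum_eq_zero (fun p hp => h2 p hp), h1]
        module
      have hdeg₂ : ∀ q, a₂ q ≠ 0 → q.1.natDegree ≤ d := by
        intro q hq
        by_contra hgt
        push_neg at hgt
        have hterm : ∀ p ∈ S, p ≠ q → D q (bp p) = 0 := by
          intro p hp hpq
          have hpS := (Finset.mem_filter.1 hp).2
          exact (hbpG p).1 q (Ne.symm hpq) (by omega)
        apply hq
        show a' q - D q b₁ = 0
        by_cases hqS : q ∈ S
        · have hb : D q b₁ = D q (bp q) := by
            rw [hDb₁, Finset.sum_eq_single q (fun p hp hpq => hterm p hp hpq)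
              (fun h => absurd hqS h)]
          rw [hb, hbpD q]
          module
        · have hq0 : a' q = 0 := by
            by_contra h
            exact hqS (Finset.mem_filter.2 ⟨hfin.mem_toFinset.2 h,
              le_antisymm (hdeg q h) hgt⟩)
          have hb : D q b₁ = 0 := by
            rw [hDb₁]
            exact Finset.sum_eq_zero (fun p hp => hterm p hp (fun h => hqS (h ▸ hp)))
          rw [hq0, hb]
          module
      obtain ⟨b₂, hb₂⟩ := IH a₂ hfin₂ hdeg₂
      refine ⟨b₁ + b₂, fun p => ?_⟩
      rw [map_add, hb₂ p]
      have h2 : a₂ p = a' p - D p b₁ := rfl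
      rw [h2]
      module
  obtain ⟨b, hb⟩ := key (ha.toFinset.sup (fun p => p.1.natDegree)) a ha
    (fun p hp => Finset.le_sup (f := fun p : MonicIrr F => p.1.natDegree)
      (ha.mem_toFinset.2 hp))
  exact ⟨b, hb⟩
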